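/- Suppose f(d,l) = 0 and the center ȳ is infeasible, i.e., there exists an index j with a_jᵀȳ > u_j or a_jᵀȳ < l_j. Then there exists x ∈ ℝ^m with Ax = 0 and uᵀx₊ − lᵀx₋ < 0, i.e., a certificate of infeasibility for l ≤ Aᵀy ≤ u. (One may take either x = D t̄ with t̄ := Aᵀȳ − r, or x = D t̄ + ε(e_j − DAᵀBa_j) for a suitably small ε whose sign matches that of the violation.) -/

import Mathlib

open Matrix

lemma dotD {m : ℕ} (d x y : Fin m → ℝ) :
    x ⬝ᵥ (Matrix.diagonal d *ᵥ y) = ∑ i, d i * (x i * y i) := by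
  simp only [dotProduct, Matrix.mulVec_diagonal]
  exact Finset.sum_congr rfl fun i _ => by ring

lemma gsum {m : ℕ} (u l r v x : Fin m → ℝ)
    (hr : r = (u + l) / 2) (hv : v = (u - l) / 2) :
    u ⬝ᵥ (fun i => max (x i) 0) - l ⬝ᵥ (fun i => max (-x i) 0)
      = ∑ i, (r i * x i + v i * |x i|) := by
  subst hr hv
  simp only [dotProduct, ← Finset.sum_sub_distrib]
  refine Finset.sum_congr rfl fun i _ => ?_
  simp only [Pi.div_apply, Pi.add_apply, Pi.sub_apply, Pi.ofNat_apply]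
  rcases le_total 0 (x i) with h | h
  · rw [max_eq_left h, max_eq_right (by linarith), abs_of_nonneg h]; ring
  · rw [max_eq_right h, max_eq_left (by linarith), abs_of_nonpos h]; ring


/-- Proposition 2.2 of the paper. If `f(d,l) = 0` and the center `ȳ`
is infeasible, then there is a certificate of infeasibility `x` with `Ax = 0` and
`uᵀx₊ - lᵀx₋ < 0` for the system `l ≤ Aᵀy ≤ u`. -/
theorem stmt_8 {n m : ℕ} (A : Matrix (Fin n) (Fin m) ℝ) (u l d r v : Fin m → ℝ)
    (hd : 0 ≤ d)
    (hr : r = (u + l) / 2) (hv : v = (u - l) / 2)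
    (hpd : (A * Matrix.diagonal d * Aᵀ).PosDef)
    (B : Matrix (Fin n) (Fin n) ℝ) (hB : B = (A * Matrix.diagonal d * Aᵀ)⁻¹)
    (ybar : Fin n → ℝ)
    (hybar : ybar = B *ᵥ (A *ᵥ (Matrix.diagonal d *ᵥ r)))
    (hf : r ⬝ᵥ (Matrix.diagonal d *ᵥ (Aᵀ *ᵥ (B *ᵥ (A *ᵥ (Matrix.diagonal d *ᵥ r)))))
        - r ⬝ᵥ (Matrix.diagonal d *ᵥ r) + v ⬝ᵥ (Matrix.diagonal d *ᵥ v) = 0)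
    (hinfeas : ∃ j : Fin m, (fun k => A k j) ⬝ᵥ ybar > u j ∨ (fun k => A k j) ⬝ᵥ ybar < l j) :
    ∃ x : Fin m → ℝ, A *ᵥ x = 0 ∧
      u ⬝ᵥ (fun i => max (x i) 0) - l ⬝ᵥ (fun i => max (-x i) 0) < 0 := by
  classical
  obtain ⟨j, hj⟩ := hinfeas
  set D := Matrix.diagonal d with hDdef
  set M := A * D * Aᵀ with hMdef
  have hMdet : IsUnit M.det := (Matrix.isUnit_iff_isUnit_det M).1 hpd.isUnit
  have hBM : B * M = 1 := by rw [hB]; exact Matrix.nonsing_inv_mul M hMdet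
  have hMB : M * B = 1 := by rw [hB]; exact Matrix.mul_nonsing_inv M hMdet
  have hDsym : Dᵀ = D := by rw [hDdef]; exact Matrix.diagonal_transpose d
  have hMsym : Mᵀ = M := by
    rw [hMdef, Matrix.transpose_mul, Matrix.transpose_mul, Matrix.transpose_transpose,
      hDsym, Matrix.mul_assoc]
  have hBsym : Bᵀ = B := by
    rw [hB, Matrix.transpose_nonsing_inv, hMsym]
  have htrans : ∀ (P : Matrix (Fin n) (Fin m) ℝ) (x : Fin m → ℝ) (y : Fin n → ℝ),
      x ⬝ᵥ (Pᵀ *ᵥ y) = (P *ᵥ x) ⬝ᵥ y := by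
    intro P x y
    rw [Matrix.dotProduct_mulVec, Matrix.vecMul_transpose]
  have htrans2 : ∀ (P : Matrix (Fin n) (Fin m) ℝ) (x : Fin n → ℝ) (y : Fin m → ℝ),
      x ⬝ᵥ (P *ᵥ y) = (Pᵀ *ᵥ x) ⬝ᵥ y := by
    intro P x y
    rw [Matrix.dotProduct_mulVec, ← Matrix.mulVec_transpose]
  have hDsw : ∀ x y : Fin m → ℝ, x ⬝ᵥ (D *ᵥ y) = (D *ᵥ x) ⬝ᵥ y := by
    intro x y
    rw [hDdef, dotD, dotProduct]
    exact Finset.sum_congr rfl fun i _ => by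
      simp only [Matrix.mulVec_diagonal]; ring
  set tb : Fin m → ℝ := Aᵀ *ᵥ ybar - r with htbdef
  have hMybar : M *ᵥ ybar = A *ᵥ (D *ᵥ r) := by
    rw [hybar, Matrix.mulVec_mulVec, hMB, Matrix.one_mulVec]
  have hDtb : D *ᵥ tb = D *ᵥ (Aᵀ *ᵥ ybar) - D *ᵥ r := by
    rw [htbdef, Matrix.mulVec_sub]
  have hADt : A *ᵥ (D *ᵥ tb) = 0 := by
    rw [hDtb, Matrix.mulVec_sub, Matrix.mulVec_mulVec, Matrix.mulVec_mulVec,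
      ← hMdef, hMybar, sub_self]
  have hI1 : ∑ i, d i * (r i * tb i) = -(∑ i, d i * (v i * v i)) := by
    have hf' : r ⬝ᵥ (D *ᵥ (Aᵀ *ᵥ ybar)) - r ⬝ᵥ (D *ᵥ r) + v ⬝ᵥ (D *ᵥ v) = 0 := by
      rw [hybar]; exact hf
    rw [hDdef, dotD, dotD, dotD] at hf'
    have : ∑ i, d i * (r i * tb i)
        = (∑ i, d i * (r i * ((Aᵀ *ᵥ ybar) i))) - ∑ i, d i * (r i * r i) := by
      rw [← Finset.sum_sub_distrib]
      exact Finset.sum_congr rfl fun i _ => by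
        simp only [htbdef, Pi.sub_apply]; ring
    rw [this]; linarith
  have hI2 : ∑ i, d i * (tb i * tb i) = ∑ i, d i * (v i * v i) := by
    have h1 : ∑ i, d i * (tb i * ((Aᵀ *ᵥ ybar) i)) = 0 := by
      calc ∑ i, d i * (tb i * ((Aᵀ *ᵥ ybar) i))
          = tb ⬝ᵥ (D *ᵥ (Aᵀ *ᵥ ybar)) := by rw [hDdef, dotD]
        _ = (D *ᵥ tb) ⬝ᵥ (Aᵀ *ᵥ ybar) := hDsw _ _
        _ = (A *ᵥ (D *ᵥ tb)) ⬝ᵥ ybar := htrans _ _ _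
        _ = 0 := by rw [hADt, zero_dotProduct]
    have h2 : tb ⬝ᵥ (D *ᵥ tb) = tb ⬝ᵥ (D *ᵥ (Aᵀ *ᵥ ybar)) - tb ⬝ᵥ (D *ᵥ r) := by
      rw [hDtb, dotProduct_sub]
    rw [hDdef, dotD, dotD, dotD] at h2
    have h3 : ∑ i, d i * (tb i * r i) = ∑ i, d i * (r i * tb i) :=
      Finset.sum_congr rfl fun i _ => by ring
    rw [h1, h3, hI1] at h2
    linarith
  -- Cauchy-Schwarz
  set Sv : ℝ := ∑ i, d i * (v i * v i) with hSvdef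
  set P : ℝ := ∑ i, d i * (v i * |tb i|) with hPdef
  set Q : ℝ := ∑ i, d i * (|v i| * |tb i|) with hQdef
  have hSvnonneg : 0 ≤ Sv :=
    Finset.sum_nonneg fun i _ => mul_nonneg (hd i) (mul_self_nonneg _)
  have hQnonneg : 0 ≤ Q := Finset.sum_nonneg fun i _ =>
    mul_nonneg (hd i) (mul_nonneg (abs_nonneg _) (abs_nonneg _))
  have hQS : Q ≤ Sv := by
    have key := Finset.sum_mul_sq_le_sq_mul_sq Finset.univ
      (fun i => Real.sqrt (d i) * |v i|) (fun i => Real.sqrt (d i) * |tb i|)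
    have e1 : ∑ i, (Real.sqrt (d i) * |v i|) * (Real.sqrt (d i) * |tb i|) = Q :=
      Finset.sum_congr rfl fun i _ => by
        rw [show (Real.sqrt (d i) * |v i|) * (Real.sqrt (d i) * |tb i|)
          = (Real.sqrt (d i) * Real.sqrt (d i)) * (|v i| * |tb i|) from by ring,
          Real.mul_self_sqrt (hd i)]
    have e2 : ∑ i, (Real.sqrt (d i) * |v i|) ^ 2 = Sv :=
      Finset.sum_congr rfl fun i _ => by
        rw [mul_pow, Real.sq_sqrt (hd i), sq_abs]; ring
    have e3 : ∑ i, (Real.sqrt (d i) * |tb i|) ^ 2 = Sv := by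
      rw [← hI2]
      exact Finset.sum_congr rfl fun i _ => by
        rw [mul_pow, Real.sq_sqrt (hd i), sq_abs]; ring
    rw [e1, e2, e3] at key
    nlinarith
  have hPQ : P ≤ Q := Finset.sum_le_sum fun i _ =>
    mul_le_mul_of_nonneg_left
      (mul_le_mul_of_nonneg_right (le_abs_self _) (abs_nonneg _)) (hd i)
  rcases lt_or_eq_of_le (le_trans hPQ hQS) with hlt | heq
  · -- Case A : P < Sv, take x = D tb
    refine ⟨fun i => d i * tb i, ?_, ?_⟩
    · have : (fun i => d i * tb i) = D *ᵥ tb := by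
        funext i; rw [hDdef, Matrix.mulVec_diagonal]
      rw [this, hADt]
    · rw [gsum u l r v _ hr hv]
      have : ∑ i, (r i * (d i * tb i) + v i * |d i * tb i|)
          = (∑ i, d i * (r i * tb i)) + P := by
        rw [hPdef, ← Finset.sum_add_distrib]
        exact Finset.sum_congr rfl fun i _ => by
          rw [abs_mul, abs_of_nonneg (hd i)]; ring
      rw [this, hI1]
      linarith
  · -- Case B : P = Sv
    have hSvQ : Sv ≤ Q := heq ▸ hPQ
    have hQ1 : Q = Sv := le_antisymm hQS hSvQ
    have hpw1 : ∀ i, d i * ((|v i| - v i) * |tb i|) = 0 := by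
      have hnn : ∀ i ∈ Finset.univ, (0:ℝ) ≤ d i * ((|v i| - v i) * |tb i|) := fun i _ =>
        mul_nonneg (hd i) (mul_nonneg (by linarith [le_abs_self (v i)]) (abs_nonneg _))
      have hsum : ∑ i, d i * ((|v i| - v i) * |tb i|) = Q - P := by
        rw [hQdef, hPdef, ← Finset.sum_sub_distrib]
        exact Finset.sum_congr rfl fun i _ => by ring
      intro i
      exact (Finset.sum_eq_zero_iff_of_nonneg hnn).1
        (by rw [hsum, hQ1, heq, sub_self]) i (Finset.mem_univ i)
    have hpw2 : ∀ i, d i = 0 ∨ |v i| = |tb i| := by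
      have hnn : ∀ i ∈ Finset.univ, (0:ℝ) ≤ d i * (|v i| - |tb i|) ^ 2 := fun i _ =>
        mul_nonneg (hd i) (sq_nonneg _)
      have hsum : ∑ i, d i * (|v i| - |tb i|) ^ 2 = Sv - 2 * Q + Sv := by
        have expand : ∀ i, d i * (|v i| - |tb i|) ^ 2
            = d i * (v i * v i) - 2 * (d i * (|v i| * |tb i|)) + d i * (tb i * tb i) :=
          fun i => by rw [sub_sq, sq_abs, sq_abs]; ring
        calc ∑ i, d i * (|v i| - |tb i|) ^ 2
            = ∑ i, (d i * (v i * v i) - 2 * (d i * (|v i| * |tb i|)) + d i * (tb i * tb i)) :=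
              Finset.sum_congr rfl fun i _ => expand i
          _ = Sv - 2 * Q + Sv := by
              rw [Finset.sum_add_distrib, Finset.sum_sub_distrib, ← Finset.mul_sum,
                hI2, ← hSvdef, ← hQdef]
      intro i
      have h0 : d i * (|v i| - |tb i|) ^ 2 = 0 :=
        (Finset.sum_eq_zero_iff_of_nonneg hnn).1
          (by rw [hsum, hQ1]; ring) i (Finset.mem_univ i)
      rcases mul_eq_zero.1 h0 with h | h
      · exact Or.inl h
      · exact Or.inr (by nlinarith [sq_nonneg (|v i| - |tb i|)])
    have hkey : ∀ i, d i * v i = d i * |tb i| := by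
      intro i
      rcases hpw2 i with h | h
      · rw [h, zero_mul, zero_mul]
      · rcases mul_eq_zero.1 (hpw1 i) with h1 | h1
        · rw [h1, zero_mul, zero_mul]
        · rcases mul_eq_zero.1 h1 with h2 | h2
          · have : v i = |v i| := by linarith
            rw [← h, ← this]
          · rw [h2] at h
            have : v i = 0 := abs_eq_zero.1 (by simpa using h)
            simp [this, h2]
    -- translate the infeasibility of j
    have hAty : (fun k => A k j) ⬝ᵥ ybar = (Aᵀ *ᵥ ybar) j := by
      simp only [Matrix.mulVec, dotProduct, Matrix.transpose_apply]
    have hterm : (Aᵀ *ᵥ ybar) j = tb j + r j := by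
      rw [htbdef]; simp only [Pi.sub_apply]; ring
    have huj : u j = r j + v j := by
      rw [hr, hv]
      simp only [Pi.div_apply, Pi.add_apply, Pi.sub_apply, Pi.ofNat_apply]; ring
    have hlj : l j = r j - v j := by
      rw [hr, hv]
      simp only [Pi.div_apply, Pi.add_apply, Pi.sub_apply, Pi.ofNat_apply]; ring
    have htbj : v j < tb j ∨ tb j < -(v j) := by
      rcases hj with h | h
      · left; rw [hAty, hterm, huj] at h; linarith
      · right; rw [hAty, hterm, hlj] at h; linarith
    have hvtj : v j < |tb j| := by
      rcases htbj with h | h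
      · linarith [le_abs_self (tb j)]
      · linarith [neg_le_abs (tb j)]
    have hdj : d j = 0 := by
      by_contra hne
      have hvj : v j = |tb j| := mul_left_cancel₀ hne (hkey j)
      linarith
    -- the perturbation direction w
    set aj : Fin n → ℝ := fun k => A k j with hajdef
    have hAej : A *ᵥ Pi.single j (1:ℝ) = aj := by
      rw [Matrix.mulVec_single]; funext k; simp [hajdef]
    set c : Fin n → ℝ := B *ᵥ aj with hcdef
    set w : Fin m → ℝ := fun i => (Pi.single j (1:ℝ) : Fin m → ℝ) i - d i * ((Aᵀ *ᵥ c) i) with hwdef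
    have hweq : w = Pi.single j (1:ℝ) - D *ᵥ (Aᵀ *ᵥ c) := by
      funext i
      rw [hwdef]
      simp only [Pi.sub_apply, hDdef, Matrix.mulVec_diagonal]
    have hAw : A *ᵥ w = 0 := by
      rw [hweq, Matrix.mulVec_sub, hAej, Matrix.mulVec_mulVec, Matrix.mulVec_mulVec,
        ← hMdef, hcdef, Matrix.mulVec_mulVec, hMB, Matrix.one_mulVec, sub_self]
    have htrans3 : ∀ (x y : Fin n → ℝ), x ⬝ᵥ (B *ᵥ y) = (B *ᵥ x) ⬝ᵥ y := by
      intro x y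
      rw [Matrix.dotProduct_mulVec, ← Matrix.mulVec_transpose, hBsym]
    have hybaj : ybar ⬝ᵥ aj = tb j + r j := by
      rw [← hterm]
      simp only [hajdef, dotProduct, Matrix.mulVec, Matrix.transpose_apply]
      exact Finset.sum_congr rfl fun k _ => by ring
    have hrw : r ⬝ᵥ w = -(tb j) := by
      have h2 : r ⬝ᵥ (D *ᵥ (Aᵀ *ᵥ c)) = tb j + r j := by
        rw [hDsw, htrans, hcdef, htrans3, ← hybar, hybaj]
      rw [hweq, dotProduct_sub, dotProduct_single, h2]; ring
    have htw : tb ⬝ᵥ w = tb j := by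
      have h2 : tb ⬝ᵥ (D *ᵥ (Aᵀ *ᵥ c)) = 0 := by
        rw [hDsw, htrans, hADt, zero_dotProduct]
      rw [hweq, dotProduct_sub, dotProduct_single, h2]; ring
    -- choose a small ε with the right sign
    have hneU : (Finset.univ : Finset (Fin m)).Nonempty := ⟨j, Finset.mem_univ j⟩
    have hδex : ∃ δ : ℝ, 0 < δ ∧ ∀ i, d i * tb i ≠ 0 → δ * |w i| < |d i * tb i| := by
      obtain ⟨i0, _, hmin⟩ := Finset.exists_min_image Finset.univ
        (fun i => if d i * tb i = 0 then (1:ℝ) else |d i * tb i| / (|w i| + 1)) hneU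
      set g : Fin m → ℝ :=
        fun i => if d i * tb i = 0 then (1:ℝ) else |d i * tb i| / (|w i| + 1) with hgdef
      have hgpos : ∀ i, 0 < g i := by
        intro i
        by_cases h : d i * tb i = 0
        · simp only [hgdef, if_pos h]; norm_num
        · simp only [hgdef, if_neg h]
          exact div_pos (abs_pos.2 h) (by positivity)
      refine ⟨g i0, hgpos i0, fun i hne => ?_⟩
      have h1 : g i0 ≤ |d i * tb i| / (|w i| + 1) := by
        have := hmin i (Finset.mem_univ i)
        rwa [if_neg hne] at this
      have hden : (0:ℝ) < |w i| + 1 := by positivity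
      have h2 : g i0 * (|w i| + 1) ≤ |d i * tb i| := (le_div_iff₀ hden).1 h1
      have h3 : g i0 * (|w i| + 1) = g i0 * |w i| + g i0 := by ring
      linarith [hgpos i0]
    obtain ⟨δ, hδpos, hδsmall⟩ := hδex
    set ε : ℝ := if v j < tb j then δ else -δ with hεdef
    have hεabs : |ε| = δ := by
      rw [hεdef]; split_ifs
      · exact abs_of_pos hδpos
      · rw [abs_neg]; exact abs_of_pos hδpos
    set x : Fin m → ℝ := fun i => d i * tb i + ε * w i with hxdef
    refine ⟨x, ?_, ?_⟩
    · have hx : x = D *ᵥ tb + ε • w := by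
        funext i
        simp only [hxdef, Pi.add_apply, Pi.smul_apply, smul_eq_mul, hDdef,
          Matrix.mulVec_diagonal]
      rw [hx, Matrix.mulVec_add, hADt, Matrix.mulVec_smul, hAw, smul_zero, add_zero]
    · rw [gsum u l r v x hr hv]
      have hwj : w j = 1 := by
        simp only [hwdef, Pi.single_eq_same, hdj]; ring
      have hxj : x j = ε := by
        simp only [hxdef, hwj, hdj]; ring
      have hptw : ∀ i, i ≠ j → v i * |x i| = tb i * x i := by
        intro i hij
        have hsing : (Pi.single j (1:ℝ) : Fin m → ℝ) i = 0 := by simp [Pi.single_eq_of_ne hij]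
        by_cases hdi : d i = 0
        · have hwi : w i = 0 := by
            simp only [hwdef, hsing, hdi]; ring
          have hxi : x i = 0 := by simp only [hxdef, hdi, hwi]; ring
          rw [hxi]; simp
        · have hvi : v i = |tb i| := mul_left_cancel₀ hdi (hkey i)
          by_cases htbi : tb i = 0
          · have hv0 : v i = 0 := by rw [hvi, htbi, abs_zero]
            rw [hv0, htbi, zero_mul, zero_mul]
          · have hdt : d i * tb i ≠ 0 := mul_ne_zero hdi htbi
            have hεw : |ε * w i| < |d i * tb i| := by
              rw [abs_mul, hεabs]; exact hδsmall i hdt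
            have hdpos : 0 < d i := lt_of_le_of_ne (hd i) (Ne.symm hdi)
            have hxi : x i = d i * tb i + ε * w i := by simp only [hxdef]
            have hle := le_abs_self (ε * w i)
            have hge := neg_abs_le (ε * w i)
            rcases lt_or_gt_of_ne htbi with hneg | hpos
            · have hdtneg : d i * tb i < 0 := mul_neg_of_pos_of_neg hdpos hneg
              have habs : |d i * tb i| = -(d i * tb i) := abs_of_neg hdtneg
              have hxneg : x i < 0 := by rw [hxi]; linarith [habs ▸ hεw]
              rw [abs_of_neg hxneg, hvi, abs_of_neg hneg]; ring
            · have hdtpos : 0 < d i * tb i := mul_pos hdpos hpos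
              have habs : |d i * tb i| = d i * tb i := abs_of_pos hdtpos
              have hxpos : 0 < x i := by rw [hxi]; linarith [habs ▸ hεw]
              rw [abs_of_pos hxpos, hvi, abs_of_pos hpos]
      have hsplit : ∑ i, (r i * x i + v i * |x i|)
          = (∑ i, (r i * x i + tb i * x i)) + (v j * |x j| - tb j * x j) := by
        have h0 : ∑ i, (v i * |x i| - tb i * x i) = v j * |x j| - tb j * x j := by
          apply Finset.sum_eq_single_of_mem j (Finset.mem_univ j)
          intro i _ hij
          rw [hptw i hij]; ring
        calc ∑ i, (r i * x i + v i * |x i|)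
            = ∑ i, ((r i * x i + tb i * x i) + (v i * |x i| - tb i * x i)) :=
              Finset.sum_congr rfl fun i _ => by ring
          _ = _ := by rw [Finset.sum_add_distrib, h0]
      have hmain : ∑ i, (r i * x i + tb i * x i) = 0 := by
        calc ∑ i, (r i * x i + tb i * x i)
            = ∑ i, ((d i * (r i * tb i) + d i * (tb i * tb i))
                + ε * (r i * w i + tb i * w i)) :=
              Finset.sum_congr rfl fun i _ => by simp only [hxdef]; ring
          _ = ((∑ i, d i * (r i * tb i)) + ∑ i, d i * (tb i * tb i))
              + ε * ((∑ i, r i * w i) + ∑ i, tb i * w i) := by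
              rw [Finset.sum_add_distrib, Finset.sum_add_distrib, ← Finset.mul_sum,
                Finset.sum_add_distrib]
          _ = 0 := by
              rw [hI1, hI2, show (∑ i, r i * w i) = r ⬝ᵥ w from rfl,
                show (∑ i, tb i * w i) = tb ⬝ᵥ w from rfl, hrw, htw]
              ring
      rw [hsplit, hmain, hxj, zero_add]
      by_cases hc : v j < tb j
      · have hε : ε = δ := by rw [hεdef]; exact if_pos hc
        rw [hε, abs_of_pos hδpos]
        have h5 : 0 < (tb j - v j) * δ := mul_pos (sub_pos.2 hc) hδpos
        have h6 : (tb j - v j) * δ = tb j * δ - v j * δ := by ring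
        linarith
      · have hc2 : tb j < -(v j) := htbj.resolve_left hc
        have hε : ε = -δ := by rw [hεdef]; exact if_neg hc
        rw [hε, abs_neg, abs_of_pos hδpos]
        have h5 : 0 < (-(v j) - tb j) * δ := mul_pos (sub_pos.2 hc2) hδpos
        have h6 : (-(v j) - tb j) * δ = -(v j) * δ - tb j * δ := by ring
        have h7 : v j * δ - tb j * -δ = -(-(v j) * δ - tb j * δ) := by ring
        linarith
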